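/- For every time t, the aggregate state of charge of any feasible schedule satisfies the lower bound B(t) ≥ ∑_{j ∈ J : d_j ≤ t} E_j + ∑_{j ∈ J : a_j ≤ t < d_j} max{E_j − (d_j − t)·L̄_j, 0}. -/

import Mathlib

open Finset

/-- Lower bound on the aggregate state of charge of any
feasible schedule of deferrable tasks. -/
theorem aggregate_soc_lower_bound
    {ι : Type*} (J : Finset ι)
    (a d : ι → ℕ) (Lbar : ι → ℝ) (En : ι → ℝ) (L : ι → ℕ → ℝ)
    (had : ∀ j ∈ J, a j < d j)
    (hLbar : ∀ j ∈ J, 0 ≤ Lbar j)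
    (hLlb : ∀ j ∈ J, ∀ t : ℕ, a j ≤ t → t < d j → 0 ≤ L j t ∧ L j t ≤ Lbar j)
    (hLout : ∀ j ∈ J, ∀ t : ℕ, ¬(a j ≤ t ∧ t < d j) → L j t = 0)
    (hE : ∀ j ∈ J, ∑' t : ℕ, L j t = En j)
    (B U : ℕ → ℝ)
    (hB : ∀ t : ℕ, B t = ∑ τ ∈ Finset.range t, ∑ j ∈ J, L j τ)
    (hU : ∀ t : ℕ, U t = ∑ j ∈ J, L j t) :
    ∀ t : ℕ,
      B t ≥ (∑ j ∈ J.filter (fun j => d j ≤ t), En j) +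
        ∑ j ∈ J.filter (fun j => a j ≤ t ∧ t < d j),
          max (En j - ((d j : ℝ) - (t : ℝ)) * Lbar j) 0 := by
  intro t
  -- nonnegativity of each power value
  have hL0 : ∀ j ∈ J, ∀ τ : ℕ, 0 ≤ L j τ := by
    intro j hj τ
    by_cases h : a j ≤ τ ∧ τ < d j
    · exact (hLlb j hj τ h.1 h.2).1
    · rw [hLout j hj τ h]
  -- the energy is the finite sum over range (d j)
  have hEsum : ∀ j ∈ J, En j = ∑ τ ∈ Finset.range (d j), L j τ := by
    intro j hj
    rw [← hE j hj]
    exact (tsum_eq_sum (fun τ hτ => hLout j hj τ (by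
      simp only [Finset.mem_range, not_lt] at hτ; omega)))
  -- per-task bound
  have key : ∀ j ∈ J,
      (if d j ≤ t then En j else 0) +
      (if a j ≤ t ∧ t < d j then max (En j - ((d j : ℝ) - (t : ℝ)) * Lbar j) 0 else 0)
      ≤ ∑ τ ∈ Finset.range t, L j τ := by
    intro j hj
    have hS0 : 0 ≤ ∑ τ ∈ Finset.range t, L j τ :=
      Finset.sum_nonneg fun τ _ => hL0 j hj τ
    by_cases h1 : d j ≤ t
    · have h2 : ¬(a j ≤ t ∧ t < d j) := by omega
      simp only [h1, if_pos, h2, if_neg, not_false_iff, add_zero]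
      have : ∑ τ ∈ Finset.range t, L j τ = ∑ τ ∈ Finset.range (d j), L j τ := by
        refine (Finset.sum_subset (Finset.range_subset_range.mpr h1) ?_).symm
        intro τ _ hτ
        exact hLout j hj τ (by simp only [Finset.mem_range, not_lt] at hτ; omega)
      rw [this, ← hEsum j hj]
    · simp only [h1, if_neg, not_false_iff, zero_add]
      by_cases h2 : a j ≤ t ∧ t < d j
      · simp only [h2, if_pos]
        refine max_le ?_ hS0
        -- En j = ∑ range t + ∑ Ico t (d j)
        have hsplit : En j = (∑ τ ∈ Finset.range t, L j τ) +
            ∑ τ ∈ Finset.Ico t (d j), L j τ := by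
          rw [hEsum j hj, Finset.range_eq_Ico, Finset.range_eq_Ico]
          exact (Finset.sum_Ico_consecutive _ (Nat.zero_le t) (le_of_lt h2.2)).symm
        have htail : ∑ τ ∈ Finset.Ico t (d j), L j τ ≤ ((d j : ℝ) - (t : ℝ)) * Lbar j := by
          have hb : ∑ τ ∈ Finset.Ico t (d j), L j τ ≤
              ∑ τ ∈ Finset.Ico t (d j), Lbar j := by
            refine Finset.sum_le_sum fun τ hτ => ?_
            rw [Finset.mem_Ico] at hτ
            exact (hLlb j hj τ (le_trans h2.1 hτ.1) hτ.2).2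
          have hc : ∑ τ ∈ Finset.Ico t (d j), Lbar j =
              ((d j : ℝ) - (t : ℝ)) * Lbar j := by
            rw [Finset.sum_const, Nat.card_Ico, nsmul_eq_mul,
              Nat.cast_sub (le_of_lt h2.2)]
          linarith
        linarith
      · simp only [h2, if_neg, not_false_iff]
        exact hS0
  -- assemble
  rw [hB t, Finset.sum_comm, ge_iff_le,
    Finset.sum_filter (fun j => d j ≤ t) En,
    Finset.sum_filter (fun j => a j ≤ t ∧ t < d j)
      (fun j => max (En j - ((d j : ℝ) - (t : ℝ)) * Lbar j) 0),
    ← Finset.sum_add_distrib]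
  exact Finset.sum_le_sum key
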